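/- Let k ≥ 5 be an odd integer, and let G be a graph with the property that every induced subgraph of G either is a k-ring or has a simplicial vertex. Then χ(G) ≤ f_k(ω(G)). -/

import Mathlib

open SimpleGraph

/-- The closed neighborhood `N_G[v]` of a vertex `v`. -/
def closedNbhd {V : Type} (G : SimpleGraph V) (v : V) : Set V :=
  insert v (G.neighborSet v)

/-- `X` (indexed cyclically by `ZMod k`) is a ring partition of `G`:
a partition into `k` nonempty sets, each of which can be ordered so that the
closed neighborhoods are nested, with the last one covering `X i` and the first
one being exactly `X (i-1) ∪ X i ∪ X (i+1)`. -/
def IsRingPartition {V : Type} (G : SimpleGraph V) (k : ℕ) (X : ZMod k → Set V) : Prop :=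
  (∀ i, (X i).Nonempty) ∧
  (∀ v : V, ∃! i, v ∈ X i) ∧
  ∀ i, ∃ (m : ℕ) (hm : 0 < m) (u : Fin m → V),
    Function.Injective u ∧
    Set.range u = X i ∧
    (∀ j j' : Fin m, j ≤ j' → closedNbhd G (u j') ⊆ closedNbhd G (u j)) ∧
    X i ⊆ closedNbhd G (u ⟨m - 1, by omega⟩) ∧
    closedNbhd G (u ⟨0, hm⟩) = X (i - 1) ∪ X i ∪ X (i + 1)

/-- `G` is a `k`-ring. -/
def IsRing {V : Type} (G : SimpleGraph V) (k : ℕ) : Prop :=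
  ∃ X : ZMod k → Set V, IsRingPartition G k X

/-- `X` is a hyperhole partition of `G`: a partition into `k` nonempty cliques,
each complete to the two neighboring cliques and anticomplete to all remaining
vertices. -/
def IsHyperholePartition {V : Type} (G : SimpleGraph V) (k : ℕ) (X : ZMod k → Set V) : Prop :=
  (∀ i, (X i).Nonempty) ∧
  (∀ v : V, ∃! i, v ∈ X i) ∧
  (∀ i, G.IsClique (X i)) ∧
  (∀ i, ∀ x ∈ X i, ∀ y ∈ X (i - 1) ∪ X (i + 1), G.Adj x y) ∧
  (∀ i, ∀ x ∈ X i, ∀ y, y ∉ X (i - 1) ∪ X i ∪ X (i + 1) → ¬ G.Adj x y)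

/-- `G` is a `k`-hyperhole. -/
def IsHyperhole {V : Type} (G : SimpleGraph V) (k : ℕ) : Prop :=
  ∃ X : ZMod k → Set V, IsHyperholePartition G k X

/-- `X` is a hyperantihole partition of `G`: a partition into `k` nonempty cliques,
each complete to all vertices outside the two neighboring cliques (and itself),
and anticomplete to the two neighboring cliques. -/
def IsHyperantiholePartition {V : Type} (G : SimpleGraph V) (k : ℕ) (X : ZMod k → Set V) : Prop :=
  (∀ i, (X i).Nonempty) ∧
  (∀ v : V, ∃! i, v ∈ X i) ∧
  (∀ i, G.IsClique (X i)) ∧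
  (∀ i, ∀ x ∈ X i, ∀ y, y ∉ X (i - 1) ∪ X i ∪ X (i + 1) → G.Adj x y) ∧
  (∀ i, ∀ x ∈ X i, ∀ y ∈ X (i - 1) ∪ X (i + 1), ¬ G.Adj x y)

/-- `G` is a `k`-hyperantihole. -/
def IsHyperantihole {V : Type} (G : SimpleGraph V) (k : ℕ) : Prop :=
  ∃ X : ZMod k → Set V, IsHyperantiholePartition G k X

/-- A vertex is simplicial if its neighborhood is a clique. -/
def IsSimplicial {V : Type} (G : SimpleGraph V) (v : V) : Prop :=
  G.IsClique (G.neighborSet v)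

/-- A graph is perfect if every induced subgraph has chromatic number equal to
its clique number. -/
def IsPerfect {V : Type} (G : SimpleGraph V) : Prop :=
  ∀ S : Set V, (G.induce S).chromaticNumber = ((G.induce S).cliqueNum : ℕ∞)

/-- The function `f_k`: `⌊kn/(k-1)⌋` if `n ≡ 0, 1 (mod k-1)`, and `⌈kn/(k-1)⌉`
otherwise. -/
def ringF (k n : ℕ) : ℕ :=
  if n % (k - 1) ≤ 1 then k * n / (k - 1) else (k * n + (k - 2)) / (k - 1)

/-- The function `g_k`: `⌊kn/(k-1)⌋` if `n mod (k-1) ∈ {0, …, (k-3)/2}`, and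
`⌈kn/(k-1)⌉` if `n mod (k-1) ∈ {(k-1)/2, …, k-2}`. -/
def ringG (k n : ℕ) : ℕ :=
  if n % (k - 1) ≤ (k - 3) / 2 then k * n / (k - 1) else (k * n + (k - 2)) / (k - 1)

/-- The function `f_T`: `⌊5n/4⌋` if `n ≡ 0, 1 (mod 4)`, and `⌈5n/4⌉` if
`n ≡ 2, 3 (mod 4)`. -/
def fT (n : ℕ) : ℕ :=
  if n % 4 ≤ 1 then 5 * n / 4 else (5 * n + 3) / 4

/-- `G` contains the complete graph `K_m` as a minor, witnessed by `m` pairwise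
disjoint nonempty branch sets, each inducing a connected subgraph, with an edge
between every two of them. -/
def HasCompleteMinor {V : Type} (G : SimpleGraph V) (m : ℕ) : Prop :=
  ∃ S : Fin m → Set V,
    (∀ i, (S i).Nonempty) ∧
    (∀ i j, i ≠ j → Disjoint (S i) (S j)) ∧
    (∀ i, (G.induce (S i)).Connected) ∧
    (∀ i j, i ≠ j → ∃ x ∈ S i, ∃ y ∈ S j, G.Adj x y)

namespace RkProof


lemma ringF_eq {k : ℕ} (hk : 5 ≤ k) (n : ℕ) :
    ringF k n = n + n / (k - 1) + (if n % (k - 1) ≤ 1 then 0 else 1) := by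
  have h1 : 0 < k - 1 := by omega
  have hkn : k * n = n + n * (k - 1) := by
    have hh : k - 1 + 1 = k := by omega
    calc k * n = (k - 1 + 1) * n := by rw [hh]
    _ = n + n * (k - 1) := by ring
  unfold ringF
  by_cases h : n % (k - 1) ≤ 1
  · rw [if_pos h, if_pos h, hkn, Nat.add_mul_div_right _ _ h1]
    omega
  · rw [if_neg h, if_neg h]
    have hkn2 : k * n + (k - 2) = (n + (k - 2)) + n * (k - 1) := by omega
    rw [hkn2, Nat.add_mul_div_right _ _ h1]
    have hmod := Nat.div_add_mod n (k - 1)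
    have hmlt : n % (k - 1) < k - 1 := Nat.mod_lt _ h1
    have hsplit : n + (k - 2) = (n % (k - 1) + (k - 2)) + (k - 1) * (n / (k - 1)) := by
      omega
    rw [hsplit, Nat.add_mul_div_left _ _ h1]
    have hone : (n % (k - 1) + (k - 2)) / (k - 1) = 1 :=
      Nat.div_eq_of_lt_le (by omega) (by omega)
    omega

lemma ringF_le_ringF {k : ℕ} (hk : 5 ≤ k) {a b : ℕ} (h : a ≤ b) :
    ringF k a ≤ ringF k b := by
  rw [ringF_eq hk, ringF_eq hk]
  have hdiv : a / (k - 1) ≤ b / (k - 1) := Nat.div_le_div_right h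
  rcases Nat.eq_or_lt_of_le h with rfl | hlt
  · exact le_rfl
  · split_ifs <;> omega

lemma le_ringF {k : ℕ} (hk : 5 ≤ k) (n : ℕ) : n ≤ ringF k n := by
  rw [ringF_eq hk, add_assoc]; exact Nat.le_add_right _ _

lemma ringF_odd_step {k w : ℕ} (hk : 5 ≤ k) (hko : k % 2 = 1) (hw : 3 ≤ w)
    (hwo : w % 2 = 1) : ringF k w = ringF k (w - 1) + 1 := by
  have h1 : 0 < k - 1 := by omega
  have hmod := Nat.div_add_mod w (k - 1)
  have hmlt : w % (k - 1) < k - 1 := Nat.mod_lt _ h1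
  have hpar : (k - 1) * (w / (k - 1)) % 2 = 0 := by
    have h2 : (k - 1) % 2 = 0 := by omega
    have h3 := Nat.mul_mod (k - 1) (w / (k - 1)) 2
    rw [h2] at h3; simpa using h3
  have hrodd : w % (k - 1) % 2 = 1 := by omega
  have huniq := (Nat.div_mod_unique (a := w - 1) (b := k - 1)
      (c := w % (k - 1) - 1) (d := w / (k - 1)) h1).mpr ⟨by omega, by omega⟩
  rw [ringF_eq hk, ringF_eq hk, huniq.1, huniq.2]
  split_ifs <;> omega

lemma ringF_even_key {k w : ℕ} (hk : 5 ≤ k) (hko : k % 2 = 1) (hw : 2 ≤ w)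
    (hwe : w % 2 = 0) : k * w ≤ (k - 1) * ringF k w ∧ w + 1 ≤ ringF k w := by
  have h1 : 0 < k - 1 := by omega
  have hmod := Nat.div_add_mod w (k - 1)
  have hmlt : w % (k - 1) < k - 1 := Nat.mod_lt _ h1
  have hpar : (k - 1) * (w / (k - 1)) % 2 = 0 := by
    have h2 : (k - 1) % 2 = 0 := by omega
    have h3 := Nat.mul_mod (k - 1) (w / (k - 1)) 2
    rw [h2] at h3; simpa using h3
  have hkw : k * w = (k - 1) * w + w := by
    have hh : k - 1 + 1 = k := by omega
    calc k * w = (k - 1 + 1) * w := by rw [hh]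
    _ = (k - 1) * w + w := by ring
  have hnn1 : 0 ≤ w / (k - 1) := Nat.zero_le _
  have hnn2 : 0 ≤ (k - 1) * (w / (k - 1)) := Nat.zero_le _
  rw [ringF_eq hk]
  by_cases h : w % (k - 1) ≤ 1
  · have hr0 : w % (k - 1) = 0 := by omega
    have hq1 : 1 ≤ w / (k - 1) := by
      rcases Nat.eq_zero_or_pos (w / (k - 1)) with hq | hq
      · rw [hq] at hmod; simp at hmod; omega
      · exact hq
    rw [if_pos h]
    have hexp : (k - 1) * (w + w / (k - 1) + 0) =
        (k - 1) * w + (k - 1) * (w / (k - 1)) := by ring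
    constructor
    · rw [hexp]; omega
    · omega
  · rw [if_neg h]
    have hexp : (k - 1) * (w + w / (k - 1) + 1) =
        (k - 1) * w + (k - 1) * (w / (k - 1)) + (k - 1) := by ring
    constructor
    · rw [hexp]; omega
    · omega


def sigE (C s j : ℕ) : ℕ := if j ≤ s then j - 1 else C - (j - s)

def colE (k C s i j : ℕ) : ℕ := (i * ((k - 1) / 2 * C) / k + sigE C s j) % C

def colF (k w i j : ℕ) : ℕ :=
  if w % 2 = 0 then colE k (ringF k w) (w / 2) i j
  else if j = (w + 1) / 2 then ringF k w - 1
  else colE k (ringF k (w - 1)) ((w - 1) / 2) i (if j < (w + 1) / 2 then j else j - 1)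

lemma sigE_lt {C s j : ℕ} (hC : 2 * s + 1 ≤ C) (hj1 : 1 ≤ j) (hj2 : j ≤ 2 * s - 1) :
    sigE C s j < C := by
  unfold sigE; split_ifs <;> omega

lemma sigE_inj {C s : ℕ} {j j' : ℕ} (hs : 1 ≤ s) (hC : 2 * s + 1 ≤ C)
    (hj1 : 1 ≤ j) (hj2 : j ≤ 2 * s - 1) (hj1' : 1 ≤ j') (hj2' : j' ≤ 2 * s - 1)
    (h : sigE C s j = sigE C s j') : j = j' := by
  unfold sigE at h; split_ifs at h <;> omega

lemma seam {C s t j j' : ℕ} (hs : 1 ≤ s) (hC : 2 * s + 1 ≤ C)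
    (ht1 : s ≤ t) (ht2 : t ≤ C - s)
    (hj1 : 1 ≤ j) (hj2 : j ≤ 2 * s - 1) (hj1' : 1 ≤ j') (hj2' : j' ≤ 2 * s - 1)
    (h : (t + sigE C s j') % C = sigE C s j % C) : 2 * s + 1 ≤ j + j' := by
  unfold sigE at h
  by_cases hjs : j ≤ s <;> by_cases hjs' : j' ≤ s
  · rw [if_pos hjs', if_pos hjs, Nat.mod_eq_of_lt (by omega),
      Nat.mod_eq_of_lt (by omega)] at h
    omega
  · rw [if_neg hjs', if_pos hjs] at h
    have hrw : t + (C - (j' - s)) = C + (t - (j' - s)) := by omega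
    rw [hrw, Nat.add_mod_left, Nat.mod_eq_of_lt (by omega),
      Nat.mod_eq_of_lt (by omega)] at h
    omega
  · rw [if_pos hjs', if_neg hjs, Nat.mod_eq_of_lt (by omega),
      Nat.mod_eq_of_lt (by omega)] at h
    omega
  · omega

lemma div_step_low {k X s : ℕ} (hk : 0 < k) (h : s * k ≤ X) (i : ℕ) :
    i * X / k + s ≤ (i + 1) * X / k := by
  have h5 : (i * X + s * k) / k = i * X / k + s := Nat.add_mul_div_right _ _ hk
  have h6 : i * X + s * k ≤ (i + 1) * X := by
    have he : (i + 1) * X = i * X + X := by ring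
    omega
  have h7 := Nat.div_le_div_right (c := k) h6
  omega

lemma div_step_high {k X c : ℕ} (hk : 0 < k) (h : X ≤ c * k) (i : ℕ) :
    (i + 1) * X / k ≤ i * X / k + c := by
  have h5 : (i * X + c * k) / k = i * X / k + c := Nat.add_mul_div_right _ _ hk
  have h6 : (i + 1) * X ≤ i * X + c * k := by
    have he : (i + 1) * X = i * X + X := by ring
    omega
  have h7 := Nat.div_le_div_right (c := k) h6
  omega

lemma div_wrap_low {k X s : ℕ} (hk : 0 < k) (h : s * k ≤ X) :
    (k - 1) * X / k + s ≤ X := by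
  have e1 : (k - 1) * X + X = k * X := by
    have hh : k - 1 + 1 = k := by omega
    calc (k - 1) * X + X = (k - 1 + 1) * X := by ring
    _ = k * X := by rw [hh]
  have e2 : (X - s) * k = X * k - s * k := Nat.sub_mul _ _ _
  have e3 : X * k = k * X := by ring
  have hsX : s ≤ X := by
    have : s * 1 ≤ s * k := Nat.mul_le_mul_left _ hk
    omega
  have h5 : (k - 1) * X ≤ (X - s) * k := by omega
  have h6 := Nat.div_le_div_right (c := k) h5
  have h7 : (X - s) * k / k = X - s := Nat.mul_div_cancel _ hk
  omega

lemma div_wrap_high {k X c : ℕ} (hk : 0 < k) (h : X ≤ c * k) :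
    X ≤ (k - 1) * X / k + c := by
  have e1 : (k - 1) * X + X = k * X := by
    have hh : k - 1 + 1 = k := by omega
    calc (k - 1) * X + X = (k - 1 + 1) * X := by ring
    _ = k * X := by rw [hh]
  have e2 : (X - c) * k = X * k - c * k := Nat.sub_mul _ _ _
  have e3 : X * k = k * X := by ring
  have h5 : (X - c) * k ≤ (k - 1) * X := by omega
  have h6 := Nat.div_le_div_right (c := k) h5
  have h7 : (X - c) * k / k = X - c := Nat.mul_div_cancel _ hk
  omega

lemma colE_spec {k C s : ℕ} (hk : 5 ≤ k) (hko : k % 2 = 1) (hs : 1 ≤ s)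
    (hC : 2 * s + 1 ≤ C) (hkey : k * (2 * s) ≤ (k - 1) * C) :
    (∀ i j, 1 ≤ j → j ≤ 2 * s - 1 → colE k C s i j < C) ∧
    (∀ i j j', 1 ≤ j → j ≤ 2 * s - 1 → 1 ≤ j' → j' ≤ 2 * s - 1 →
      colE k C s i j = colE k C s i j' → j = j') ∧
    (∀ i j j', i < k → 1 ≤ j → j ≤ 2 * s - 1 → 1 ≤ j' → j' ≤ 2 * s - 1 →
      colE k C s i j = colE k C s ((i + 1) % k) j' → 2 * s + 1 ≤ j + j') := by
  have hkpos : 0 < k := by omega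
  have hCpos : 0 < C := by omega
  have h2L : 2 * ((k - 1) / 2 * C) = (k - 1) * C := by
    have h2 : 2 * ((k - 1) / 2) = k - 1 := by omega
    calc 2 * ((k - 1) / 2 * C) = 2 * ((k - 1) / 2) * C := by ring
    _ = (k - 1) * C := by rw [h2]
  have hks2 : 2 * (s * k) = k * (2 * s) := by ring
  have hX1 : s * k ≤ (k - 1) / 2 * C := by omega
  have hX2 : (k - 1) / 2 * C ≤ (C - s) * k := by
    have hkC : (k - 1) * C + C = k * C := by
      have hh : k - 1 + 1 = k := by omega
      calc (k - 1) * C + C = (k - 1 + 1) * C := by ring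
      _ = k * C := by rw [hh]
    have h4 : (C - s) * k = C * k - s * k := Nat.sub_mul _ _ _
    have h5 : C * k = k * C := by ring
    omega
  refine ⟨fun i j _ _ => Nat.mod_lt _ hCpos, ?_, ?_⟩
  · intro i j j' hj1 hj2 hj1' hj2' h
    have hme : Nat.ModEq C (i * ((k - 1) / 2 * C) / k + sigE C s j)
        (i * ((k - 1) / 2 * C) / k + sigE C s j') := h
    have hme2 := hme.add_left_cancel' (i * ((k - 1) / 2 * C) / k)
    have heq : sigE C s j = sigE C s j' := by
      have e1 := Nat.mod_eq_of_lt (sigE_lt hC hj1 hj2)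
      have e2 := Nat.mod_eq_of_lt (sigE_lt hC hj1' hj2')
      unfold Nat.ModEq at hme2
      omega
    exact sigE_inj hs hC hj1 hj2 hj1' hj2' heq
  · intro i j j' hik hj1 hj2 hj1' hj2' h
    by_cases hi : i + 1 < k
    · have hmod : (i + 1) % k = i + 1 := Nat.mod_eq_of_lt hi
      rw [hmod] at h
      have hb1 := div_step_low hkpos hX1 i
      have hb2 := div_step_high hkpos hX2 i
      set t : ℕ := (i + 1) * ((k - 1) / 2 * C) / k - i * ((k - 1) / 2 * C) / k with htdef
      have ht1 : s ≤ t := by omega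
      have ht2 : t ≤ C - s := by omega
      have hre : (i + 1) * ((k - 1) / 2 * C) / k + sigE C s j'
          = i * ((k - 1) / 2 * C) / k + (t + sigE C s j') := by omega
      rw [colE, colE, hre] at h
      have hme : Nat.ModEq C (i * ((k - 1) / 2 * C) / k + sigE C s j)
          (i * ((k - 1) / 2 * C) / k + (t + sigE C s j')) := h
      have hme2 := hme.add_left_cancel' (i * ((k - 1) / 2 * C) / k)
      exact seam hs hC ht1 ht2 hj1 hj2 hj1' hj2' hme2.symm
    · have hieq : i = k - 1 := by omega
      have hmod : (i + 1) % k = 0 := by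
        have : i + 1 = k := by omega
        rw [this, Nat.mod_self]
      rw [hmod] at h
      rw [colE, colE, hieq] at h
      rw [show (0 : ℕ) * ((k - 1) / 2 * C) / k = 0 by simp] at h
      rw [Nat.zero_add] at h
      have hw1 := div_wrap_low (X := (k - 1) / 2 * C) hkpos hX1
      have hw2 := div_wrap_high (X := (k - 1) / 2 * C) hkpos hX2
      set t : ℕ := (k - 1) / 2 * C - (k - 1) * ((k - 1) / 2 * C) / k with htdef
      have ht1 : s ≤ t := by omega
      have ht2 : t ≤ C - s := by omega
      have m1 : Nat.ModEq C (t + sigE C s j')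
          (t + ((k - 1) * ((k - 1) / 2 * C) / k + sigE C s j)) :=
        Nat.ModEq.add_left t h.symm
      have m2 : t + ((k - 1) * ((k - 1) / 2 * C) / k + sigE C s j)
          = (k - 1) / 2 * C + sigE C s j := by omega
      rw [m2] at m1
      have m3 : Nat.ModEq C ((k - 1) / 2 * C + sigE C s j) (sigE C s j) := by
        have hz : Nat.ModEq C ((k - 1) / 2 * C) 0 := by
          unfold Nat.ModEq
          simpa using Nat.mul_mod_left ((k - 1) / 2) C
        simpa using hz.add_right (sigE C s j)
      exact seam hs hC ht1 ht2 hj1 hj2 hj1' hj2' (m1.trans m3)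

lemma colF_odd_eq {k w : ℕ} (hpar : w % 2 = 1) (i j : ℕ) (hne : j ≠ (w + 1) / 2) :
    colF k w i j
      = colE k (ringF k (w - 1)) ((w - 1) / 2) i (if j < (w + 1) / 2 then j else j - 1) := by
  rw [colF, if_neg (by omega), if_neg hne]

lemma colF_odd_mid {k w : ℕ} (hpar : w % 2 = 1) (i : ℕ) :
    colF k w i ((w + 1) / 2) = ringF k w - 1 := by
  rw [colF, if_neg (by omega), if_pos rfl]

lemma colF_spec {k w : ℕ} (hk : 5 ≤ k) (hko : k % 2 = 1) (hw : 2 ≤ w) :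
    (∀ i j, 1 ≤ j → j ≤ w - 1 → colF k w i j < ringF k w) ∧
    (∀ i j j', 1 ≤ j → j ≤ w - 1 → 1 ≤ j' → j' ≤ w - 1 →
      colF k w i j = colF k w i j' → j = j') ∧
    (∀ i j j', i < k → 1 ≤ j → j ≤ w - 1 → 1 ≤ j' → j' ≤ w - 1 →
      colF k w i j = colF k w ((i + 1) % k) j' → w + 1 ≤ j + j') := by
  by_cases hpar : w % 2 = 0
  · obtain ⟨hkey, hC⟩ := ringF_even_key hk hko hw hpar
    have hs : 1 ≤ w / 2 := by omega
    have h2s : 2 * (w / 2) = w := by omega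
    obtain ⟨s1, s2, s3⟩ := colE_spec (C := ringF k w) (s := w / 2) hk hko hs
      (by omega) (by rw [h2s]; exact hkey)
    refine ⟨?_, ?_, ?_⟩
    · intro i j hj1 hj2
      rw [colF, if_pos hpar]
      exact s1 i j hj1 (by omega)
    · intro i j j' hj1 hj2 hj1' hj2' h
      rw [colF, if_pos hpar, colF, if_pos hpar] at h
      exact s2 i j j' hj1 (by omega) hj1' (by omega) h
    · intro i j j' hik hj1 hj2 hj1' hj2' h
      rw [colF, if_pos hpar, colF, if_pos hpar] at h
      have := s3 i j j' hik hj1 (by omega) hj1' (by omega) h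
      omega
  · -- odd w
    have hwo : w % 2 = 1 := by omega
    have hw3 : 3 ≤ w := by omega
    have hstep := ringF_odd_step hk hko hw3 hwo
    have hw1e : (w - 1) % 2 = 0 := by omega
    obtain ⟨hkey, hC⟩ := ringF_even_key hk hko (by omega : 2 ≤ w - 1) hw1e
    have hs : 1 ≤ (w - 1) / 2 := by omega
    have h2s : 2 * ((w - 1) / 2) = w - 1 := by omega
    obtain ⟨s1, s2, s3⟩ := colE_spec (C := ringF k (w - 1)) (s := (w - 1) / 2) hk hko hs
      (by omega) (by rw [h2s]; omega)
    refine ⟨?_, ?_, ?_⟩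
    · intro i j hj1 hj2
      by_cases hmid : j = (w + 1) / 2
      · subst hmid; rw [colF_odd_mid hwo]; omega
      · rw [colF_odd_eq hwo i j hmid]
        have hb1 : 1 ≤ (if j < (w + 1) / 2 then j else j - 1) := by split_ifs <;> omega
        have hb2 : (if j < (w + 1) / 2 then j else j - 1) ≤ 2 * ((w - 1) / 2) - 1 := by
          split_ifs <;> omega
        have := s1 i _ hb1 hb2
        omega
    · intro i j j' hj1 hj2 hj1' hj2' h
      by_cases hmid : j = (w + 1) / 2 <;> by_cases hmid' : j' = (w + 1) / 2
      · omega
      · exfalso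
        rw [hmid, colF_odd_mid hwo, colF_odd_eq hwo i j' hmid'] at h
        have hb1 : 1 ≤ (if j' < (w + 1) / 2 then j' else j' - 1) := by split_ifs <;> omega
        have hb2 : (if j' < (w + 1) / 2 then j' else j' - 1) ≤ 2 * ((w - 1) / 2) - 1 := by
          split_ifs <;> omega
        have := s1 i _ hb1 hb2
        omega
      · exfalso
        rw [hmid', colF_odd_mid hwo, colF_odd_eq hwo i j hmid] at h
        have hb1 : 1 ≤ (if j < (w + 1) / 2 then j else j - 1) := by split_ifs <;> omega
        have hb2 : (if j < (w + 1) / 2 then j else j - 1) ≤ 2 * ((w - 1) / 2) - 1 := by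
          split_ifs <;> omega
        have := s1 i _ hb1 hb2
        omega
      · rw [colF_odd_eq hwo i j hmid, colF_odd_eq hwo i j' hmid'] at h
        have hb1 : 1 ≤ (if j < (w + 1) / 2 then j else j - 1) := by split_ifs <;> omega
        have hb2 : (if j < (w + 1) / 2 then j else j - 1) ≤ 2 * ((w - 1) / 2) - 1 := by
          split_ifs <;> omega
        have hb1' : 1 ≤ (if j' < (w + 1) / 2 then j' else j' - 1) := by split_ifs <;> omega
        have hb2' : (if j' < (w + 1) / 2 then j' else j' - 1) ≤ 2 * ((w - 1) / 2) - 1 := by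
          split_ifs <;> omega
        have heq := s2 i _ _ hb1 hb2 hb1' hb2' h
        split_ifs at heq <;> omega
    · intro i j j' hik hj1 hj2 hj1' hj2' h
      by_cases hmid : j = (w + 1) / 2 <;> by_cases hmid' : j' = (w + 1) / 2
      · omega
      · exfalso
        rw [hmid, colF_odd_mid hwo, colF_odd_eq hwo ((i + 1) % k) j' hmid'] at h
        have hb1 : 1 ≤ (if j' < (w + 1) / 2 then j' else j' - 1) := by split_ifs <;> omega
        have hb2 : (if j' < (w + 1) / 2 then j' else j' - 1) ≤ 2 * ((w - 1) / 2) - 1 := by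
          split_ifs <;> omega
        have := s1 ((i + 1) % k) _ hb1 hb2
        omega
      · exfalso
        rw [hmid', colF_odd_mid hwo, colF_odd_eq hwo i j hmid] at h
        have hb1 : 1 ≤ (if j < (w + 1) / 2 then j else j - 1) := by split_ifs <;> omega
        have hb2 : (if j < (w + 1) / 2 then j else j - 1) ≤ 2 * ((w - 1) / 2) - 1 := by
          split_ifs <;> omega
        have := s1 i _ hb1 hb2
        omega
      · rw [colF_odd_eq hwo i j hmid, colF_odd_eq hwo ((i + 1) % k) j' hmid'] at h
        have hb1 : 1 ≤ (if j < (w + 1) / 2 then j else j - 1) := by split_ifs <;> omega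
        have hb2 : (if j < (w + 1) / 2 then j else j - 1) ≤ 2 * ((w - 1) / 2) - 1 := by
          split_ifs <;> omega
        have hb1' : 1 ≤ (if j' < (w + 1) / 2 then j' else j' - 1) := by split_ifs <;> omega
        have hb2' : (if j' < (w + 1) / 2 then j' else j' - 1) ≤ 2 * ((w - 1) / 2) - 1 := by
          split_ifs <;> omega
        have hsum := s3 i _ _ hik hb1 hb2 hb1' hb2' h
        split_ifs at hsum <;> omega


section Graphs

open SimpleGraph

variable {V : Type} [Fintype V] {G : SimpleGraph V}

lemma mem_closedNbhd {x y : V} :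
    y ∈ closedNbhd G x ↔ y = x ∨ G.Adj x y := by
  simp [closedNbhd, SimpleGraph.mem_neighborSet, Set.mem_insert_iff]

/-- A proper coloring on a subset, expressed at the level of `V`. -/
def GoodCol (G : SimpleGraph V) (S : Set V) (n : ℕ) : Prop :=
  ∃ f : V → ℕ, (∀ v ∈ S, f v < n) ∧ ∀ x ∈ S, ∀ y ∈ S, G.Adj x y → f x ≠ f y

lemma clique_le_cliqueNum (S : Set V) (T : Finset ↥S)
    (hT : (G.induce S).IsClique ↑T) : T.card ≤ (G.induce S).cliqueNum := by
  haveI : Fintype ↥S := S.toFinite.fintype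
  exact SimpleGraph.IsClique.card_le_cliqueNum (tc := hT)

lemma clique_in_induce (S : Set V) (T : Finset V) (hsub : ∀ x ∈ T, x ∈ S)
    (hcl : G.IsClique ↑T) : T.card ≤ (G.induce S).cliqueNum := by
  classical
  let e : {x // x ∈ T} ↪ ↥S :=
    ⟨fun x => ⟨x.1, hsub x.1 x.2⟩, by
      intro a b hab
      have h2 : (a : V) = (b : V) := congrArg (fun z : ↥S => (z : V)) hab
      exact Subtype.ext h2⟩
  have hcl' : (G.induce S).IsClique ↑(T.attach.map e) := by
    intro x hx y hy hxy
    simp only [Finset.coe_map, Set.mem_image, Finset.mem_coe, Finset.mem_attach,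
      Function.Embedding.coeFn_mk, e] at hx hy
    obtain ⟨a, -, rfl⟩ := hx
    obtain ⟨b, -, rfl⟩ := hy
    have hne : (a : V) ≠ (b : V) := by
      intro hcon
      exact hxy (Subtype.ext hcon)
    have := hcl (Finset.mem_coe.mpr a.2) (Finset.mem_coe.mpr b.2) hne
    exact this
  have := clique_le_cliqueNum S (T.attach.map e) hcl'
  rwa [Finset.card_map, Finset.card_attach] at this

lemma cliqueNum_mono {S' S : Set V} (hss : S' ⊆ S) :
    (G.induce S').cliqueNum ≤ (G.induce S).cliqueNum := by
  classical
  haveI : Fintype ↥S' := S'.toFinite.fintype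
  obtain ⟨T, hT⟩ := SimpleGraph.exists_isNClique_cliqueNum (G := G.induce S')
  have hclV : G.IsClique ↑(T.map ⟨Subtype.val, Subtype.val_injective⟩) := by
    intro x hx y hy hxy
    simp only [Finset.coe_map, Set.mem_image, Finset.mem_coe,
      Function.Embedding.coeFn_mk] at hx hy
    obtain ⟨a, ha, rfl⟩ := hx
    obtain ⟨b, hb, rfl⟩ := hy
    have : (G.induce S').Adj a b :=
      hT.isClique (Finset.mem_coe.mpr ha) (Finset.mem_coe.mpr hb)
        (fun hcon => hxy (congrArg Subtype.val hcon))
    exact this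
  have hsub : ∀ x ∈ T.map ⟨Subtype.val, Subtype.val_injective⟩, x ∈ S := by
    intro x hx
    simp only [Finset.mem_map, Function.Embedding.coeFn_mk] at hx
    obtain ⟨a, -, rfl⟩ := hx
    exact hss a.2
  have := clique_in_induce S _ hsub hclV
  rwa [Finset.card_map, hT.card_eq] at this

lemma main (k : ℕ) (hk : 5 ≤ k) (hko : Odd k) (G : SimpleGraph V)
    (h : ∀ S : Set V, S.Nonempty →
      IsRing (G.induce S) k ∨ ∃ v : S, IsSimplicial (G.induce S) v) :
    ∀ (n : ℕ) (S : Set V), S.ncard ≤ n → GoodCol G S (ringF k (G.induce S).cliqueNum) := by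
  intro n
  induction n with
  | zero =>
    intro S hS
    have hemp : S = ∅ := (Set.ncard_eq_zero (hs := S.toFinite)).mp (Nat.le_zero.mp hS)
    refine ⟨fun _ => 0, ?_, ?_⟩
    · intro v hv; rw [hemp] at hv; exact absurd hv (Set.notMem_empty v)
    · intro x hx; rw [hemp] at hx; exact absurd hx (Set.notMem_empty x)
  | succ n IH =>
    intro S hS
    rcases Set.eq_empty_or_nonempty S with rfl | hne
    · refine ⟨fun _ => 0, ?_, ?_⟩
      · intro v hv; exact absurd hv (Set.notMem_empty v)
      · intro x hx; exact absurd hx (Set.notMem_empty x)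
    classical
    haveI : Fintype ↥S := S.toFinite.fintype
    set ω := (G.induce S).cliqueNum with hωdef
    rcases h S hne with hring | hsimp
    · -- ring case
      obtain ⟨X, hXne, hXuniq, hXstr⟩ := hring
      choose m hm u huinj hurange hunest hucov hutop using hXstr
      haveI : NeZero k := ⟨by omega⟩
      haveI : Fact (1 < k) := ⟨by omega⟩
      have humem : ∀ (i : ZMod k) (a : Fin (m i)), u i a ∈ X i := by
        intro i a; rw [← hurange i]; exact ⟨a, rfl⟩
      have hXdisj : ∀ (z : ↥S) (i i' : ZMod k), z ∈ X i → z ∈ X i' → i = i' := by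
        intro z i i' h1 h2
        obtain ⟨i0, hmem0, huni⟩ := hXuniq z
        rw [huni i h1, huni i' h2]
      have hbag : ∀ (i : ZMod k) (a b : Fin (m i)), a ≠ b →
          (G.induce S).Adj (u i a) (u i b) := by
        intro i a b hab
        have hble : a ≤ (⟨m i - 1, Nat.sub_lt (hm i) one_pos⟩ : Fin (m i)) := by
          rcases a with ⟨av, hav⟩
          exact Fin.mk_le_mk.mpr (by omega)
        have h1 : u i b ∈ closedNbhd (G.induce S) (u i a) :=
          hunest i a ⟨m i - 1, Nat.sub_lt (hm i) one_pos⟩ hble (hucov i (humem i b))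
        rcases mem_closedNbhd.mp h1 with heq | hadj
        · exact absurd (huinj i heq).symm hab
        · exact hadj
      have htopnbhd : ∀ (i : ZMod k) (a : Fin (m i)) (y : ↥S),
          (G.induce S).Adj (u i a) y → y ∈ X (i - 1) ∪ X i ∪ X (i + 1) := by
        intro i a y hadj
        have h0 : (⟨0, hm i⟩ : Fin (m i)) ≤ a := Fin.mk_le_mk.mpr (by omega)
        have h1 : y ∈ closedNbhd (G.induce S) (u i ⟨0, hm i⟩) :=
          hunest i ⟨0, hm i⟩ a h0 (mem_closedNbhd.mpr (Or.inr hadj))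
        rw [hutop i] at h1
        exact h1
      have hne1 : ∀ (i i' : ZMod k), i' = i + 1 →
          ∀ (c : Fin (m i)) (d : Fin (m i')), u i c ≠ u i' d := by
        intro i i' hi' c d heq
        have hmem : u i' d ∈ X i := by rw [← heq]; exact humem i c
        have hii : i' = i := hXdisj (u i' d) i' i (humem i' d) hmem
        rw [hi'] at hii
        have h10 : (1 : ZMod k) = 0 := by
          have := (left_eq_add).mp hii.symm
          exact this
        exact one_ne_zero h10
      have hcross : ∀ (i i' : ZMod k), i' = i + 1 → ∀ (a : Fin (m i)) (b : Fin (m i')),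
          (G.induce S).Adj (u i a) (u i' b) →
          ∀ (a' : Fin (m i)) (b' : Fin (m i')), a' ≤ a → b' ≤ b →
          (G.induce S).Adj (u i a') (u i' b') := by
        intro i i' hi' a b hadj a' b' ha' hb'
        have s1 : (G.induce S).Adj (u i a') (u i' b) := by
          have h1 : u i' b ∈ closedNbhd (G.induce S) (u i a) :=
            mem_closedNbhd.mpr (Or.inr hadj)
          have h2 := hunest i a' a ha' h1
          rcases mem_closedNbhd.mp h2 with heq | hadj2
          · exact absurd heq.symm (hne1 i i' hi' a' b)
          · exact hadj2
        have s2 : (G.induce S).Adj (u i' b') (u i a') := by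
          have h1 : u i a' ∈ closedNbhd (G.induce S) (u i' b) :=
            mem_closedNbhd.mpr (Or.inr s1.symm)
          have h2 := hunest i' b' b hb' h1
          rcases mem_closedNbhd.mp h2 with heq | hadj2
          · exact absurd heq (hne1 i i' hi' a' b')
          · exact hadj2
        exact s2.symm
      have hcliquebound : ∀ (i i' : ZMod k), i' = i + 1 →
          ∀ (a : Fin (m i)) (b : Fin (m i')),
          (G.induce S).Adj (u i a) (u i' b) → a.1 + 1 + (b.1 + 1) ≤ ω := by
        intro i i' hi' a b hadj
        have hle1 : a.1 + 1 ≤ m i := a.2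
        have hle2 : b.1 + 1 ≤ m i' := b.2
        let e1 : Fin (a.1 + 1) ↪ ↥S :=
          ⟨fun t => u i (Fin.castLE hle1 t),
            (huinj i).comp (Fin.castLE_injective hle1)⟩
        let e2 : Fin (b.1 + 1) ↪ ↥S :=
          ⟨fun t => u i' (Fin.castLE hle2 t),
            (huinj i').comp (Fin.castLE_injective hle2)⟩
        set T1 : Finset ↥S := Finset.univ.map e1 with hT1
        set T2 : Finset ↥S := Finset.univ.map e2 with hT2
        have hmem1 : ∀ x, x ∈ T1 ↔ ∃ t, u i (Fin.castLE hle1 t) = x := by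
          intro x; simp [hT1, e1]
        have hmem2 : ∀ x, x ∈ T2 ↔ ∃ t, u i' (Fin.castLE hle2 t) = x := by
          intro x; simp [hT2, e2]
        have hdisj : Disjoint T1 T2 := by
          rw [Finset.disjoint_left]
          intro x hx1 hx2
          obtain ⟨t1, ht1⟩ := (hmem1 x).mp hx1
          obtain ⟨t2, ht2⟩ := (hmem2 x).mp hx2
          exact hne1 i i' hi' _ _ (ht1.trans ht2.symm)
        have hcl : (G.induce S).IsClique ↑(T1 ∪ T2) := by
          intro x hx y hy hxy
          rw [Finset.coe_union, Set.mem_union] at hx hy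
          rcases hx with hx | hx <;> rcases hy with hy | hy
          · obtain ⟨t1, rfl⟩ := (hmem1 x).mp hx
            obtain ⟨t2, rfl⟩ := (hmem1 y).mp hy
            exact hbag i _ _ (fun hcon => hxy (congrArg (u i) hcon))
          · obtain ⟨t1, rfl⟩ := (hmem1 x).mp hx
            obtain ⟨t2, rfl⟩ := (hmem2 y).mp hy
            exact hcross i i' hi' a b hadj _ _
              (Fin.mk_le_mk.mpr (by omega)) (Fin.mk_le_mk.mpr (by omega))
          · obtain ⟨t1, rfl⟩ := (hmem2 x).mp hx
            obtain ⟨t2, rfl⟩ := (hmem1 y).mp hy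
            exact (hcross i i' hi' a b hadj _ _
              (Fin.mk_le_mk.mpr (by omega)) (Fin.mk_le_mk.mpr (by omega))).symm
          · obtain ⟨t1, rfl⟩ := (hmem2 x).mp hx
            obtain ⟨t2, rfl⟩ := (hmem2 y).mp hy
            exact hbag i' _ _ (fun hcon => hxy (congrArg (u i') hcon))
        have hcard := clique_le_cliqueNum S (T1 ∪ T2) hcl
        rw [Finset.card_union_of_disjoint hdisj] at hcard
        simp only [hT1, hT2, Finset.card_map, Finset.card_univ, Fintype.card_fin] at hcard
        exact hcard
      have hbagsize : ∀ i : ZMod k, m i + 1 ≤ ω := by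
        intro i
        have hadj : (G.induce S).Adj (u (i - 1) ⟨0, hm (i - 1)⟩)
            (u i ⟨m i - 1, Nat.sub_lt (hm i) one_pos⟩) := by
          have hmem : (u i ⟨m i - 1, Nat.sub_lt (hm i) one_pos⟩ : ↥S)
              ∈ X ((i - 1) - 1) ∪ X (i - 1) ∪ X ((i - 1) + 1) := by
            have hieq : (i - 1) + 1 = i := by ring
            rw [hieq]
            exact Or.inr (humem i _)
          rw [← hutop (i - 1)] at hmem
          rcases mem_closedNbhd.mp hmem with heq | hadj
          · exfalso
            exact hne1 (i - 1) i (by ring) ⟨0, hm (i - 1)⟩ ⟨m i - 1, Nat.sub_lt (hm i) one_pos⟩ heq.symm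
          · exact hadj
        have hres := hcliquebound (i - 1) i (by ring) ⟨0, hm (i - 1)⟩
          ⟨m i - 1, Nat.sub_lt (hm i) one_pos⟩ hadj
        have := hm i
        simp only at hres
        omega
      have hω2 : 2 ≤ ω := by
        have h1 := hbagsize 0
        have h2 := hm 0
        omega
      choose bg hbg1 hbg2 using fun x : ↥S => hXuniq x
      have hdepth : ∀ x : ↥S, ∃ a : Fin (m (bg x)), u (bg x) a = x := by
        intro x
        have h1 : x ∈ X (bg x) := hbg1 x
        rw [← hurange (bg x)] at h1
        exact h1
      choose dp hdp using hdepth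
      obtain ⟨P1, P2, P3⟩ := colF_spec (w := ω) hk (Nat.odd_iff.mp hko) hω2
      have hdpb : ∀ z : ↥S, (dp z).val + 1 ≤ ω - 1 := by
        intro z
        have h1 := hbagsize (bg z)
        have h2 := (dp z).2
        omega
      refine ⟨fun x => if hx : x ∈ S then
        colF k ω (bg ⟨x, hx⟩).val ((dp ⟨x, hx⟩).val + 1) else 0, ?_, ?_⟩
      · intro x hx
        simp only [dif_pos hx]
        exact P1 _ _ (by omega) (hdpb ⟨x, hx⟩)
      · intro x hx y hy hadj hcontra
        simp only [dif_pos hx, dif_pos hy] at hcontra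
        set xs : ↥S := ⟨x, hx⟩ with hxs
        set ys : ↥S := ⟨y, hy⟩ with hys
        have hadj' : (G.induce S).Adj xs ys := hadj
        have hxyne : xs ≠ ys := by
          intro hcon
          exact G.ne_of_adj hadj (congrArg Subtype.val hcon)
        have htr : bg ys = bg xs ∨ bg ys = bg xs + 1 ∨ bg ys = bg xs - 1 := by
          have hmem := htopnbhd (bg xs) (dp xs) ys (by rw [hdp xs]; exact hadj')
          rcases hmem with (hmem | hmem) | hmem
          · right; right; exact (hbg2 ys _ hmem).symm
          · left; exact (hbg2 ys _ hmem).symm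
          · right; left; exact (hbg2 ys _ hmem).symm
        rcases htr with hsame | hnexta | hpreva
        · obtain ⟨b', hb'1, hb'2⟩ : ∃ b' : Fin (m (bg xs)),
              u (bg xs) b' = ys ∧ b'.1 = (dp ys).1 := by
            rw [← hsame]; exact ⟨dp ys, hdp ys, rfl⟩
          have hvs : (bg ys).val = (bg xs).val := congrArg ZMod.val hsame
          rw [hvs] at hcontra
          have hvv := P2 (bg xs).val _ _ (by omega) (hdpb xs) (by omega) (hdpb ys) hcontra
          have hfin : dp xs = b' := Fin.ext (by omega)
          apply hxyne
          rw [← hdp xs, hfin, hb'1]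
        · obtain ⟨b', hb'1, hb'2⟩ : ∃ b' : Fin (m (bg xs + 1)),
              u (bg xs + 1) b' = ys ∧ b'.1 = (dp ys).1 := by
            rw [← hnexta]; exact ⟨dp ys, hdp ys, rfl⟩
          have hadj2 : (G.induce S).Adj (u (bg xs) (dp xs)) (u (bg xs + 1) b') := by
            rw [hdp xs, hb'1]; exact hadj'
          have hsum := hcliquebound (bg xs) (bg xs + 1) rfl (dp xs) b' hadj2
          have hval : (bg ys).val = ((bg xs).val + 1) % k := by
            rw [hnexta, ZMod.val_add, ZMod.val_one]
          rw [hval] at hcontra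
          have := P3 (bg xs).val _ _ (ZMod.val_lt _) (by omega) (hdpb xs)
            (by omega) (hdpb ys) hcontra
          omega
        · have hnext' : bg xs = bg ys + 1 := by rw [hpreva]; ring
          obtain ⟨a', ha'1, ha'2⟩ : ∃ a' : Fin (m (bg ys + 1)),
              u (bg ys + 1) a' = xs ∧ a'.1 = (dp xs).1 := by
            rw [← hnext']; exact ⟨dp xs, hdp xs, rfl⟩
          have hadj2 : (G.induce S).Adj (u (bg ys) (dp ys)) (u (bg ys + 1) a') := by
            rw [hdp ys, ha'1]; exact hadj'.symm
          have hsum := hcliquebound (bg ys) (bg ys + 1) rfl (dp ys) a' hadj2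
          have hval : (bg xs).val = ((bg ys).val + 1) % k := by
            rw [hnext', ZMod.val_add, ZMod.val_one]
          rw [hval] at hcontra
          have := P3 (bg ys).val _ _ (ZMod.val_lt _) (by omega) (hdpb ys)
            (by omega) (hdpb xs) hcontra.symm
          omega
    · -- simplicial case
      obtain ⟨v, hv⟩ := hsimp
      have hvS : (v : V) ∈ S := v.2
      have hcard : (S \ {(v : V)}).ncard ≤ n := by
        have := Set.ncard_diff_singleton_lt_of_mem hvS S.toFinite
        omega
      obtain ⟨f, hf1, hf2⟩ := IH (S \ {(v : V)}) hcard
      have hmono : ringF k (G.induce (S \ {(v : V)})).cliqueNum ≤ ringF k ω :=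
        ringF_le_ringF hk (cliqueNum_mono Set.diff_subset)
      set N := ringF k ω with hN
      set NB : Finset V := S.toFinset.filter (fun y => G.Adj (v : V) y) with hNB
      have hNBmem : ∀ y, y ∈ NB ↔ y ∈ S ∧ G.Adj (v : V) y := by
        intro y; simp [hNB]
      have hvnotNB : (v : V) ∉ NB := by
        intro hcon
        exact G.loopless.irrefl _ ((hNBmem _).mp hcon).2
      have hclique : G.IsClique ↑(insert (v : V) NB) := by
        intro x hx y hy hxy
        simp only [Finset.coe_insert, Set.mem_insert_iff, Finset.mem_coe] at hx hy
        rcases hx with rfl | hx <;> rcases hy with rfl | hy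
        · exact absurd rfl hxy
        · exact ((hNBmem y).mp hy).2
        · exact (((hNBmem x).mp hx).2).symm
        · have hx' := (hNBmem x).mp hx
          have hy' := (hNBmem y).mp hy
          have hmx : (⟨x, hx'.1⟩ : ↥S) ∈ (G.induce S).neighborSet v := hx'.2
          have hmy : (⟨y, hy'.1⟩ : ↥S) ∈ (G.induce S).neighborSet v := hy'.2
          have hne : (⟨x, hx'.1⟩ : ↥S) ≠ ⟨y, hy'.1⟩ := by
            intro hcon
            exact hxy (congrArg Subtype.val hcon)
          exact hv hmx hmy hne
      have hcliquecard : (insert (v : V) NB).card ≤ ω := by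
        apply clique_in_induce S _ _ hclique
        intro x hx
        simp only [Finset.mem_insert] at hx
        rcases hx with rfl | hx
        · exact hvS
        · exact ((hNBmem x).mp hx).1
      have hNBcard : NB.card < ω := by
        rw [Finset.card_insert_of_notMem hvnotNB] at hcliquecard
        omega
      have hωN : ω ≤ N := le_ringF hk ω
      set img := NB.image f with himg
      have himgcard : img.card < N :=
        lt_of_le_of_lt Finset.card_image_le (lt_of_lt_of_le hNBcard hωN)
      have hfree : ∃ c, c ∈ Finset.range N ∧ c ∉ img := by
        by_contra hcon
        push_neg at hcon
        have hsub : Finset.range N ⊆ img := fun c hc => hcon c hc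
        have := Finset.card_le_card hsub
        rw [Finset.card_range] at this
        omega
      obtain ⟨c, hcN, hcimg⟩ := hfree
      rw [Finset.mem_range] at hcN
      refine ⟨fun x => if x = (v : V) then c else f x, ?_, ?_⟩
      · intro x hx
        by_cases hxv : x = (v : V)
        · simp only [if_pos hxv]; exact hcN
        · simp only [if_neg hxv]
          exact lt_of_lt_of_le (hf1 x ⟨hx, by simp [hxv]⟩) hmono
      · intro x hx y hy hadj
        by_cases hxv : x = (v : V) <;> by_cases hyv : y = (v : V)
        · subst hxv; subst hyv
          exact absurd hadj (G.loopless.irrefl _)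
        · simp only [if_pos hxv, if_neg hyv]
          intro hcf
          apply hcimg
          rw [hcf]
          exact Finset.mem_image_of_mem f ((hNBmem y).mpr ⟨hy, hxv ▸ hadj⟩)
        · simp only [if_neg hxv, if_pos hyv]
          intro hcf
          apply hcimg
          rw [← hcf]
          exact Finset.mem_image_of_mem f ((hNBmem x).mpr ⟨hx, hyv ▸ hadj.symm⟩)
        · simp only [if_neg hxv, if_neg hyv]
          exact hf2 x ⟨hx, by simp [hxv]⟩ y ⟨hy, by simp [hyv]⟩ hadj

end Graphs

end RkProof

/-- For odd `k ≥ 5`, if every (nonempty) induced subgraph of `G` is a `k`-ring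
or has a simplicial vertex, then `χ(G) ≤ f_k(ω(G))`. -/
theorem Rk_class_chromaticNumber_le {V : Type} [Fintype V]
    (k : ℕ) (hk : 5 ≤ k) (hko : Odd k) (G : SimpleGraph V)
    (h : ∀ S : Set V, S.Nonempty →
      IsRing (G.induce S) k ∨ ∃ v : S, IsSimplicial (G.induce S) v) :
    G.chromaticNumber ≤ (ringF k G.cliqueNum : ℕ∞) := by
  classical
  have hgc := RkProof.main k hk hko G h (Set.univ : Set V).ncard Set.univ le_rfl
  obtain ⟨f, hf1, hf2⟩ := hgc
  have hcol : G.Colorable (ringF k (G.induce Set.univ).cliqueNum) :=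
    ⟨SimpleGraph.Coloring.mk (fun v => ⟨f v, hf1 v trivial⟩)
      (fun {a b} hab hfe => hf2 a trivial b trivial hab (congrArg Fin.val hfe))⟩
  have hmono : (G.induce Set.univ).cliqueNum ≤ G.cliqueNum := by
    haveI : Fintype ↥(Set.univ : Set V) := (Set.univ : Set V).toFinite.fintype
    obtain ⟨T, hT⟩ := SimpleGraph.exists_isNClique_cliqueNum (G := G.induce Set.univ)
    have hclV : G.IsClique ↑(T.map ⟨Subtype.val, Subtype.val_injective⟩) := by
      intro x hx y hy hxy
      simp only [Finset.coe_map, Set.mem_image, Finset.mem_coe,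
        Function.Embedding.coeFn_mk] at hx hy
      obtain ⟨a, ha, rfl⟩ := hx
      obtain ⟨b, hb, rfl⟩ := hy
      have : (G.induce Set.univ).Adj a b :=
        hT.isClique (Finset.mem_coe.mpr ha) (Finset.mem_coe.mpr hb)
          (fun hcon => hxy (congrArg Subtype.val hcon))
      exact this
    have hle := SimpleGraph.IsClique.card_le_cliqueNum (G := G) (tc := hclV)
    rwa [Finset.card_map, hT.card_eq] at hle
  have hcol2 := hcol.mono (RkProof.ringF_le_ringF hk hmono)
  exact_mod_cast hcol2.chromaticNumber_le
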